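/- Let A be any finite set of natural numbers all of whose elements are at least 3 (A may contain three consecutive integers), and let B be a Tribonacci representation set with ∑_{i∈A} T(i) = ∑_{i∈B} T(i). Then ∑_{i∈A} T(i+1) = ∑_{i∈B} T(i+1). In other words, the shifted value of a proper (possibly non-canonical) Tribonacci representation of n equals out(n). -/

import Mathlib

/-- The Tribonacci sequence: T(0)=0, T(1)=0, T(2)=1,
    T(n+3) = T(n+2) + T(n+1) + T(n). -/
def trib : ℕ → ℕ
  | 0 => 0
  | 1 => 0
  | 2 => 1
  | n + 3 => trib (n + 2) + trib (n + 1) + trib n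

/-- A Tribonacci representation set: a finite set of naturals, all at least 3,
    containing no three consecutive integers. -/
def IsTribRep (S : Finset ℕ) : Prop :=
  (∀ i ∈ S, 3 ≤ i) ∧ ∀ i : ℕ, ¬(i ∈ S ∧ i + 1 ∈ S ∧ i + 2 ∈ S)


lemma trib_le_succ (n : ℕ) : trib n ≤ trib (n + 1) := by
  match n with
  | 0 => simp [trib]
  | 1 => simp [trib]
  | n + 2 =>
    show trib (n + 2) ≤ trib (n + 3)
    rw [trib]
    omega

lemma trib_mono : Monotone trib := monotone_nat_of_le_succ trib_le_succ

lemma trib_pos {n : ℕ} (h : 2 ≤ n) : 0 < trib n :=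
  lt_of_lt_of_le (by norm_num [trib]) (trib_mono h)

lemma trib_rec (k : ℕ) : trib (k + 3) = trib (k + 2) + trib (k + 1) + trib k := by
  rw [trib]

lemma trib_rec4 (k : ℕ) : trib (k + 4) = trib (k + 3) + trib (k + 2) + trib (k + 1) :=
  trib_rec (k + 1)

lemma isTribRep_subset {S S' : Finset ℕ} (h : S' ⊆ S) (hS : IsTribRep S) : IsTribRep S' :=
  ⟨fun i hi => hS.1 i (h hi), fun i hc => hS.2 i ⟨h hc.1, h hc.2.1, h hc.2.2⟩⟩

lemma rep_bound : ∀ m : ℕ, ∀ S : Finset ℕ, IsTribRep S → (∀ i ∈ S, i ≤ m) →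
    ∑ i ∈ S, trib i ≤ trib (m + 1) - 1 := by
  intro m
  induction m using Nat.strong_induction_on with
  | _ m ih =>
    intro S hS hSm
    by_cases hmS : m ∈ S
    · have hm3 : 3 ≤ m := hS.1 m hmS
      obtain ⟨k, rfl⟩ : ∃ k, m = k + 3 := ⟨m - 3, by omega⟩
      have hsum3 : ∑ i ∈ S.erase (k + 3), trib i + trib (k + 3) = ∑ i ∈ S, trib i :=
        Finset.sum_erase_add _ _ hmS
      by_cases h1 : k + 2 ∈ S
      · have h2 : k + 1 ∉ S := fun hc => hS.2 (k + 1) ⟨hc, h1, hmS⟩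
        have h1' : k + 2 ∈ S.erase (k + 3) := Finset.mem_erase.mpr ⟨by omega, h1⟩
        have hsum2 : ∑ i ∈ (S.erase (k + 3)).erase (k + 2), trib i + trib (k + 2)
            = ∑ i ∈ S.erase (k + 3), trib i := Finset.sum_erase_add _ _ h1'
        have hX : ∑ i ∈ (S.erase (k + 3)).erase (k + 2), trib i ≤ trib (k + 1) - 1 := by
          apply ih k (by omega)
          · exact isTribRep_subset (fun x hx =>
              Finset.mem_of_mem_erase (Finset.mem_of_mem_erase hx)) hS
          · intro i hi
            have h3 := Finset.mem_of_mem_erase (Finset.mem_of_mem_erase hi)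
            have h4 := Finset.ne_of_mem_erase hi
            have h5 := Finset.ne_of_mem_erase (Finset.mem_of_mem_erase hi)
            have h6 := hSm i h3
            rcases eq_or_ne i (k + 1) with rfl | h7
            · exact absurd h3 h2
            · omega
        have hrec := trib_rec4 k
        have hp : 0 < trib (k + 2) := trib_pos (by omega)
        have hk2 : 3 ≤ k + 2 := hS.1 _ h1
        have hp1 : 0 < trib (k + 1) := trib_pos (by omega)
        show ∑ i ∈ S, trib i ≤ trib (k + 4) - 1
        omega
      · have hX : ∑ i ∈ S.erase (k + 3), trib i ≤ trib (k + 2) - 1 := by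
          apply ih (k + 1) (by omega)
          · exact isTribRep_subset (fun x hx => Finset.mem_of_mem_erase hx) hS
          · intro i hi
            have h3 := Finset.mem_of_mem_erase hi
            have h4 := Finset.ne_of_mem_erase hi
            have h6 := hSm i h3
            rcases eq_or_ne i (k + 2) with rfl | h7
            · exact absurd h3 h1
            · omega
        have hrec := trib_rec4 k
        have hp : 0 < trib (k + 2) := trib_pos (by omega)
        show ∑ i ∈ S, trib i ≤ trib (k + 4) - 1
        omega
    · match m with
      | 0 =>
        have : S = ∅ := Finset.eq_empty_of_forall_notMem fun i hi => by
          have := hS.1 i hi; have := hSm i hi; omega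
        simp [this]
      | j + 1 =>
        have hX : ∑ i ∈ S, trib i ≤ trib (j + 1) - 1 := by
          apply ih j (by omega) S hS
          intro i hi
          have := hSm i hi
          rcases eq_or_ne i (j + 1) with rfl | h7
          · exact absurd hi hmS
          · omega
        have := trib_le_succ (j + 1)
        omega

lemma rep_unique : ∀ n : ℕ, ∀ A B : Finset ℕ, IsTribRep A → IsTribRep B →
    ∑ i ∈ A, trib i = n → ∑ i ∈ B, trib i = n → A = B := by
  intro n
  induction n using Nat.strong_induction_on with
  | _ n ih =>
    intro A B hA hB hAn hBn
    have empty_of_zero : ∀ C : Finset ℕ, IsTribRep C → ∑ i ∈ C, trib i = 0 → C = ∅ := by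
      intro C hC hC0
      apply Finset.eq_empty_of_forall_notMem
      intro i hi
      have h1 : 0 < trib i := trib_pos (by have := hC.1 i hi; omega)
      have h2 : trib i ≤ ∑ j ∈ C, trib j :=
        Finset.single_le_sum (fun j _ => Nat.zero_le _) hi
      omega
    rcases A.eq_empty_or_nonempty with rfl | hAne
    · simp at hAn
      rw [empty_of_zero B hB (by omega)]
    rcases B.eq_empty_or_nonempty with rfl | hBne
    · simp at hBn
      rw [empty_of_zero A hA (by omega)]
    set a := A.max' hAne with ha
    set b := B.max' hBne with hb
    have haA : a ∈ A := A.max'_mem hAne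
    have hbB : b ∈ B := B.max'_mem hBne
    have ha3 : 3 ≤ a := hA.1 a haA
    have hb3 : 3 ≤ b := hB.1 b hbB
    have hAb : trib a ≤ n := hAn ▸ Finset.single_le_sum (fun j _ => Nat.zero_le _) haA
    have hBb : trib b ≤ n := hBn ▸ Finset.single_le_sum (fun j _ => Nat.zero_le _) hbB
    have hAup : n ≤ trib (a + 1) - 1 := hAn ▸ rep_bound a A hA (fun i hi => A.le_max' i hi)
    have hBup : n ≤ trib (b + 1) - 1 := hBn ▸ rep_bound b B hB (fun i hi => B.le_max' i hi)
    have hab : a = b := by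
      by_contra hne
      rcases Nat.lt_or_ge a b with hlt | hge
      · have h1 : trib (a + 1) ≤ trib b := trib_mono (by omega)
        have h2 : 0 < trib (a + 1) := trib_pos (by omega)
        omega
      · have hlt : b < a := by omega
        have h1 : trib (b + 1) ≤ trib a := trib_mono (by omega)
        have h2 : 0 < trib (b + 1) := trib_pos (by omega)
        omega
    clear_value a b
    subst hab
    have hAe : ∑ i ∈ A.erase a, trib i + trib a = n := by
      rw [Finset.sum_erase_add _ _ haA]; exact hAn
    have hBe : ∑ i ∈ B.erase a, trib i + trib a = n := by
      rw [Finset.sum_erase_add _ _ hbB]; exact hBn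
    have hpa : 0 < trib a := trib_pos (by omega)
    have heq : A.erase a = B.erase a := by
      apply ih (n - trib a) (by omega)
      · exact isTribRep_subset (Finset.erase_subset _ _) hA
      · exact isTribRep_subset (Finset.erase_subset _ _) hB
      · omega
      · omega
    have : insert a (A.erase a) = insert a (B.erase a) := by rw [heq]
    rwa [Finset.insert_erase haA, Finset.insert_erase hbB] at this

lemma main_aux : ∀ c : ℕ, ∀ A : Finset ℕ, A.card = c → (∀ i ∈ A, 3 ≤ i) →
    ∀ B : Finset ℕ, IsTribRep B → ∑ i ∈ A, trib i = ∑ i ∈ B, trib i →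
    ∑ i ∈ A, trib (i + 1) = ∑ i ∈ B, trib (i + 1) := by
  intro c
  induction c using Nat.strong_induction_on with
  | _ c ih =>
    intro A hcard hA B hB h
    by_cases htrip : ∃ i, i ∈ A ∧ i + 1 ∈ A ∧ i + 2 ∈ A
    · obtain ⟨j, hj⟩ := htrip
      set s := A.filter (fun i => i + 1 ∈ A ∧ i + 2 ∈ A) with hs
      have hsne : s.Nonempty := ⟨j, Finset.mem_filter.mpr ⟨hj.1, hj.2⟩⟩
      set i := s.max' hsne with hidef
      have himem : i ∈ A ∧ (i + 1 ∈ A ∧ i + 2 ∈ A) := Finset.mem_filter.mp (s.max'_mem hsne)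
      obtain ⟨hiA, hi1A, hi2A⟩ := himem
      have hi3A : i + 3 ∉ A := by
        intro hc
        have h1 : i + 1 ∈ s := by
          rw [hs, Finset.mem_filter]
          refine ⟨hi1A, ?_, ?_⟩
          · rw [show i + 1 + 1 = i + 2 by omega]; exact hi2A
          · rw [show i + 1 + 2 = i + 3 by omega]; exact hc
        have := s.le_max' (i + 1) h1
        omega
      set T3 : Finset ℕ := {i, i + 1, i + 2} with hT3
      have hsub : T3 ⊆ A := by
        intro x hx
        rw [hT3] at hx
        simp only [Finset.mem_insert, Finset.mem_singleton] at hx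
        rcases hx with rfl | rfl | rfl <;> assumption
      have hsumT3 : ∀ f : ℕ → ℕ, ∑ x ∈ T3, f x = f i + f (i + 1) + f (i + 2) := by
        intro f
        rw [hT3, Finset.sum_insert (by simp), Finset.sum_insert (by simp), Finset.sum_singleton]
        ring
      set A' : Finset ℕ := insert (i + 3) (A \ T3) with hA'
      have hi3nd : i + 3 ∉ A \ T3 := fun hc => hi3A (Finset.mem_sdiff.mp hc).1
      have hsdiff : ∀ f : ℕ → ℕ, ∑ x ∈ A \ T3, f x + ∑ x ∈ T3, f x = ∑ x ∈ A, f x :=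
        fun f => Finset.sum_sdiff hsub
      have hsumA' : ∀ f : ℕ → ℕ, ∑ x ∈ A', f x = f (i + 3) + ∑ x ∈ A \ T3, f x := by
        intro f
        rw [hA', Finset.sum_insert hi3nd]
      have hf : ∑ x ∈ A', trib x = ∑ x ∈ A, trib x := by
        have h1 := hsdiff trib
        have h2 := hsumT3 trib
        have h3 := hsumA' trib
        have h4 := trib_rec i
        omega
      have hg : ∑ x ∈ A', trib (x + 1) = ∑ x ∈ A, trib (x + 1) := by
        have h1 := hsdiff (fun x => trib (x + 1))
        have h2 := hsumT3 (fun x => trib (x + 1))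
        have h3 := hsumA' (fun x => trib (x + 1))
        have h4 := trib_rec (i + 1)
        have e1 : trib (i + 2 + 1) = trib (i + 3) := rfl
        have e2 : trib (i + 3 + 1) = trib (i + 4) := rfl
        have e3 : trib (i + 1 + 3) = trib (i + 4) := rfl
        have e4 : trib (i + 1 + 2) = trib (i + 3) := rfl
        have e5 : trib (i + 1 + 1) = trib (i + 2) := rfl
        omega
      have hcard3 : 3 ≤ A.card := by
        have := Finset.card_le_card hsub
        rw [hT3] at this
        have hc3 : ({i, i + 1, i + 2} : Finset ℕ).card = 3 := by
          rw [Finset.card_insert_of_notMem (by simp), Finset.card_insert_of_notMem (by simp),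
            Finset.card_singleton]
        omega
      have hcardA' : A'.card = A.card - 2 := by
        rw [hA', Finset.card_insert_of_notMem hi3nd, Finset.card_sdiff_of_subset hsub]
        have hc3 : T3.card = 3 := by
          rw [hT3, Finset.card_insert_of_notMem (by simp), Finset.card_insert_of_notMem (by simp),
            Finset.card_singleton]
        omega
      have hA'3 : ∀ x ∈ A', 3 ≤ x := by
        intro x hx
        rw [hA', Finset.mem_insert] at hx
        rcases hx with rfl | hx
        · omega
        · exact hA x (Finset.mem_sdiff.mp hx).1
      have := ih A'.card (by omega) A' rfl hA'3 B hB (by omega)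
      omega
    · push_neg at htrip
      have hArep : IsTribRep A := ⟨hA, fun i hc => htrip i hc.1 hc.2.1 hc.2.2⟩
      have : A = B := rep_unique (∑ i ∈ B, trib i) A B hArep hB h rfl
      rw [this]

/-- Any proper (possibly non-canonical) Tribonacci representation respects the
    successor: if `A` is a finite set of indices `≥ 3` (possibly containing three
    consecutive integers) and `B` is the Tribonacci representation set of the same
    number, then the shifted sums agree. -/
theorem out_well_defined_on_proper_reps (A : Finset ℕ) (hA : ∀ i ∈ A, 3 ≤ i)
    (B : Finset ℕ) (hB : IsTribRep B)
    (h : ∑ i ∈ A, trib i = ∑ i ∈ B, trib i) :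
    ∑ i ∈ A, trib (i + 1) = ∑ i ∈ B, trib (i + 1) := by
  exact main_aux A.card A rfl hA B hB h
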